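/- Let a, b be points of the open unit ball 𝔹ⁿ ⊂ ℝⁿ. Define the hyperbolic distance ρ(a,b) := 2·arsinh(‖a−b‖/√((1−‖a‖²)(1−‖b‖²))) and the Hilbert distance h(a,b) := 2·arcosh((1 − ⟨a,b⟩)/√((1−‖a‖²)(1−‖b‖²))). Then tanh(ρ(a,b)/4) ≥ tanh(h(a,b)/4) ≥ ‖a−b‖/√(4 − ‖a+b‖²), with equality throughout when a = −b. -/

import Mathlib

/-- The inverse hyperbolic cosine on the reals. -/
noncomputable def arcosh (x : ℝ) : ℝ := Real.log (x + Real.sqrt (x^2 - 1))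

/-- The Hilbert distance of the unit ball `𝔹ⁿ`. -/
noncomputable def hilbertDist {n : ℕ} (a b : EuclideanSpace ℝ (Fin n)) : ℝ :=
  2 * arcosh ((1 - (inner ℝ a b : ℝ)) / Real.sqrt ((1 - ‖a‖^2) * (1 - ‖b‖^2)))

/-- The hyperbolic distance of the unit ball `𝔹ⁿ`. -/
noncomputable def hypDist {n : ℕ} (a b : EuclideanSpace ℝ (Fin n)) : ℝ :=
  2 * Real.arsinh (‖a - b‖ / Real.sqrt ((1 - ‖a‖^2) * (1 - ‖b‖^2)))

lemma tanh_eq_exp (x : ℝ) :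
    Real.tanh x = (Real.exp (2*x) - 1) / (Real.exp (2*x) + 1) := by
  have h1 : Real.exp (-x) = (Real.exp x)⁻¹ := Real.exp_neg x
  have h2 : Real.exp (2*x) = Real.exp x * Real.exp x := by
    rw [show (2:ℝ)*x = x + x by ring, Real.exp_add]
  have hx : (0:ℝ) < Real.exp x := Real.exp_pos x
  rw [Real.tanh_eq_sinh_div_cosh, Real.sinh_eq, Real.cosh_eq, h1, h2]
  have hden : Real.exp x + (Real.exp x)⁻¹ > 0 := by positivity
  have hden2 : Real.exp x * Real.exp x + 1 > 0 := by positivity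
  field_simp

lemma tanh_mono {x y : ℝ} (h : x ≤ y) : Real.tanh x ≤ Real.tanh y := by
  rw [tanh_eq_exp, tanh_eq_exp]
  have hx := Real.exp_pos (2*x)
  have hy := Real.exp_pos (2*y)
  have hxy : Real.exp (2*x) ≤ Real.exp (2*y) := Real.exp_le_exp.2 (by linarith)
  rw [div_le_div_iff₀ (by linarith) (by linarith)]
  nlinarith

lemma exp_arcosh {c : ℝ} (hc : 1 ≤ c) :
    Real.exp (arcosh c) = c + Real.sqrt (c^2 - 1) := by
  have h : (0:ℝ) < c + Real.sqrt (c^2 - 1) := by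
    have := Real.sqrt_nonneg (c^2 - 1); linarith
  exact Real.exp_log h

lemma tanh_half_arcosh {c : ℝ} (hc : 1 ≤ c) :
    Real.tanh (arcosh c / 2) = Real.sqrt ((c-1)/(c+1)) := by
  set p := Real.sqrt (c-1) with hp_def
  set r := Real.sqrt (c+1) with hr_def
  have hp2 : p^2 = c - 1 := Real.sq_sqrt (by linarith)
  have hr2 : r^2 = c + 1 := Real.sq_sqrt (by linarith)
  have hrpos : 0 < r := Real.sqrt_pos.2 (by linarith)
  have hp0 : 0 ≤ p := Real.sqrt_nonneg _
  have hq : Real.sqrt (c^2 - 1) = p * r := by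
    rw [show c^2 - 1 = (c-1)*(c+1) by ring, Real.sqrt_mul (by linarith)]
  rw [tanh_eq_exp, show 2*(arcosh c/2) = arcosh c by ring, exp_arcosh hc, hq,
    Real.sqrt_div (by linarith : (0:ℝ) ≤ c - 1), ← hp_def, ← hr_def]
  have h1 : c + p*r - 1 = p*(p+r) := by linear_combination -hp2
  have h2 : c + p*r + 1 = r*(p+r) := by linear_combination -hr2
  rw [h1, h2, mul_div_mul_right _ _ (by positivity : p + r ≠ 0)]

set_option maxHeartbeats 1600000 in
/-- Corollary 3.7: `tanh(ρ(a,b)/4) ≥ tanh(h(a,b)/4) ≥ ‖a−b‖/√(4−‖a+b‖²)` for `a, b` in the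
unit ball, with equality throughout when `a = −b`. -/
theorem stmt_9 (n : ℕ) (a b : EuclideanSpace ℝ (Fin n)) (ha : ‖a‖ < 1) (hb : ‖b‖ < 1) :
    (Real.tanh (hilbertDist a b / 4) ≤ Real.tanh (hypDist a b / 4) ∧
      ‖a - b‖ / Real.sqrt (4 - ‖a + b‖^2) ≤ Real.tanh (hilbertDist a b / 4)) ∧
    (a = -b →
      Real.tanh (hypDist a b / 4) = Real.tanh (hilbertDist a b / 4) ∧
        Real.tanh (hilbertDist a b / 4) = ‖a - b‖ / Real.sqrt (4 - ‖a + b‖^2)) := by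
  have ha0 : (0:ℝ) ≤ ‖a‖ := norm_nonneg a
  have hb0 : (0:ℝ) ≤ ‖b‖ := norm_nonneg b
  set t : ℝ := (inner ℝ a b : ℝ) with ht_def
  set D : ℝ := Real.sqrt ((1 - ‖a‖^2) * (1 - ‖b‖^2)) with hD_def
  have hA1 : ‖a‖^2 < 1 := by nlinarith
  have hB1 : ‖b‖^2 < 1 := by nlinarith
  have hD : 0 < D := Real.sqrt_pos.2 (by nlinarith)
  have hD2 : D^2 = (1 - ‖a‖^2) * (1 - ‖b‖^2) := Real.sq_sqrt (by nlinarith)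
  have hd2 : ‖a - b‖^2 = ‖a‖^2 - 2*t + ‖b‖^2 := by
    rw [norm_sub_sq_real]
  have hs2 : ‖a + b‖^2 = ‖a‖^2 + 2*t + ‖b‖^2 := by
    rw [norm_add_sq_real]
  have hcs : t^2 ≤ ‖a‖^2 * ‖b‖^2 := by
    have h := abs_real_inner_le_norm a b
    have : |t| ≤ ‖a‖ * ‖b‖ := h
    nlinarith [abs_nonneg t, sq_abs t]
  have htle : t ≤ ‖a‖ * ‖b‖ := real_inner_le_norm a b
  have hab1 : ‖a‖ * ‖b‖ < 1 := by nlinarith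
  set c : ℝ := (1 - t) / D with hc_def
  set s : ℝ := ‖a - b‖ / D with hs_def
  have hcD : c * D = 1 - t := div_mul_cancel₀ _ hD.ne'
  have hsD : s * D = ‖a - b‖ := div_mul_cancel₀ _ hD.ne'
  have hs0 : 0 ≤ s := by positivity
  have hDle : D ≤ 1 - t := by
    have h1 : D ≤ 1 - ‖a‖ * ‖b‖ := by
      rw [hD_def, ← Real.sqrt_sq (by nlinarith : (0:ℝ) ≤ 1 - ‖a‖*‖b‖)]
      apply Real.sqrt_le_sqrt
      nlinarith [sq_nonneg (‖a‖ - ‖b‖)]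
    linarith
  have hc1 : 1 ≤ c := by
    rw [hc_def, le_div_iff₀ hD]; linarith
  have hkey : (c^2 - 1 - s^2) * D^2 = t^2 - ‖a‖^2 * ‖b‖^2 := by
    calc (c^2 - 1 - s^2) * D^2 = (c*D)^2 - D^2 - (s*D)^2 := by ring
      _ = (1-t)^2 - ((1 - ‖a‖^2) * (1 - ‖b‖^2)) - ‖a - b‖^2 := by rw [hcD, hsD, hD2]
      _ = t^2 - ‖a‖^2 * ‖b‖^2 := by rw [hd2]; ring
  have hD2pos : (0:ℝ) < D^2 := by positivity
  have hc2s2 : c^2 - 1 ≤ s^2 := by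
    have hprod : (c^2 - 1 - s^2) * D^2 ≤ 0 := by rw [hkey]; linarith
    rcases lt_or_ge 0 (c^2 - 1 - s^2) with h | h
    · exact absurd hprod (not_le.mpr (mul_pos h hD2pos))
    · linarith
  -- hilbertDist / hypDist values
  have hhilb : hilbertDist a b = 2 * arcosh c := by rw [hilbertDist]
  have hhyp : hypDist a b = 2 * Real.arsinh s := by rw [hypDist]
  have hhilb4 : hilbertDist a b / 4 = arcosh c / 2 := by rw [hhilb]; ring
  have hhyp4 : hypDist a b / 4 = Real.arsinh s / 2 := by rw [hhyp]; ring
  have harcosh_le : arcosh c ≤ Real.arsinh s := by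
    rw [arcosh, Real.arsinh]
    apply Real.log_le_log (by nlinarith [Real.sqrt_nonneg (c^2-1)])
    have h1 : Real.sqrt (c^2 - 1) ≤ s := by
      rw [← Real.sqrt_sq hs0]
      exact Real.sqrt_le_sqrt hc2s2
    have h2 : c ≤ Real.sqrt (1 + s^2) := by
      rw [← Real.sqrt_sq (by linarith : (0:ℝ) ≤ c)]
      apply Real.sqrt_le_sqrt; linarith
    linarith
  have hS4 : 0 < 4 - ‖a + b‖^2 := by rw [hs2]; nlinarith
  -- the middle quantity
  have htanh_hilb : Real.tanh (hilbertDist a b / 4) = Real.sqrt ((c-1)/(c+1)) := by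
    rw [hhilb4, tanh_half_arcosh hc1]
  have hcross : ‖a - b‖^2 * (c + 1) ≤ (c - 1) * (4 - ‖a + b‖^2) := by
    have hmul : (‖a - b‖^2 * (c+1) - (c-1) * (4 - ‖a + b‖^2)) * D
        = ‖a - b‖^2 * ((1-t) + D) - ((1-t) - D) * (4 - ‖a + b‖^2) := by
      calc (‖a - b‖^2 * (c+1) - (c-1) * (4 - ‖a + b‖^2)) * D
          = ‖a - b‖^2 * (c*D + D) - (c*D - D) * (4 - ‖a + b‖^2) := by ring
        _ = _ := by rw [hcD]
    have hv : 2 * D ≤ (1 - ‖a‖^2) + (1 - ‖b‖^2) := by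
      nlinarith [sq_nonneg ((1 - ‖a‖^2) - (1 - ‖b‖^2))]
    have hu : 0 < 1 - t := by linarith
    have hRHS : ‖a - b‖^2 * ((1-t) + D) - ((1-t) - D) * (4 - ‖a + b‖^2)
        = -(2 * (1-t) * (((1 - ‖a‖^2) + (1 - ‖b‖^2)) - 2*D)) := by
      rw [hd2, hs2]; ring
    have hle : (‖a - b‖^2 * (c+1) - (c-1) * (4 - ‖a + b‖^2)) * D ≤ 0 := by
      rw [hmul, hRHS]; nlinarith
    rcases lt_or_ge 0 (‖a - b‖^2 * (c+1) - (c-1) * (4 - ‖a + b‖^2)) with h | h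
    · exact absurd hle (not_le.mpr (mul_pos h hD))
    · linarith
  have hmid : ‖a - b‖ / Real.sqrt (4 - ‖a + b‖^2)
      = Real.sqrt (‖a - b‖^2 / (4 - ‖a + b‖^2)) := by
    rw [Real.sqrt_div (sq_nonneg _), Real.sqrt_sq (norm_nonneg _)]
  refine ⟨⟨?_, ?_⟩, ?_⟩
  · exact tanh_mono (by rw [hhilb4, hhyp4]; linarith)
  · rw [htanh_hilb, hmid]
    apply Real.sqrt_le_sqrt
    rw [div_le_div_iff₀ hS4 (by linarith : (0:ℝ) < c + 1)]
    linarith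
  · intro hab
    subst hab
    -- now a = -b everywhere
    have hnb : ‖(-b : EuclideanSpace ℝ (Fin n))‖ = ‖b‖ := norm_neg b
    have hsub : (-b : EuclideanSpace ℝ (Fin n)) - b = (-2 : ℝ) • b := by module
    have hnsub : ‖(-b : EuclideanSpace ℝ (Fin n)) - b‖ = 2 * ‖b‖ := by
      rw [hsub, norm_smul]; simp
    have haddz : (-b : EuclideanSpace ℝ (Fin n)) + b = 0 := by abel
    have hinner : ((inner ℝ (-b) b : ℝ)) = -‖b‖^2 := by
      rw [inner_neg_left, real_inner_self_eq_norm_sq]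
    have hDval : D = 1 - ‖b‖^2 := by
      rw [hD_def, hnb, Real.sqrt_mul_self (by nlinarith)]
    have hB1' : (0:ℝ) < 1 - ‖b‖^2 := by nlinarith
    have hcval : c = (1 + ‖b‖^2) / (1 - ‖b‖^2) := by
      rw [hc_def, ht_def, hinner, hDval]; ring_nf
    have hsval : s = 2 * ‖b‖ / (1 - ‖b‖^2) := by
      rw [hs_def, hnsub, hDval]
    have hc2 : c^2 - 1 = s^2 := by
      rw [hcval, hsval]; field_simp; ring
    have hq1 : Real.sqrt (c^2 - 1) = s := by
      rw [hc2, Real.sqrt_sq hs0]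
    have hq2 : Real.sqrt (1 + s^2) = c := by
      rw [show 1 + s^2 = c^2 by linarith, Real.sqrt_sq (by linarith : (0:ℝ) ≤ c)]
    constructor
    · rw [hhilb4, hhyp4]
      congr 1
      rw [arcosh, Real.arsinh, hq1, hq2, add_comm]
    · rw [htanh_hilb, haddz, hnsub, norm_zero]
      have h1 : (c - 1) / (c + 1) = ‖b‖^2 := by
        rw [div_eq_iff (by linarith : c + 1 ≠ 0), hcval]
        field_simp
        ring
      rw [h1, Real.sqrt_sq hb0]
      norm_num
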